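/- Let (E₁, …, E_k) be a B-orthonormal basis of S, let γ : S → ℝ be linear, let P ∈ S satisfy B(P, Y) = γ(Y) for all Y ∈ S, let Ω ∈ ℝ, and set Eᵢ' = Eᵢ + γ(Eᵢ)·L, L' = Ω²·L, and L̄' = ½·B(P,P)·L + L̄ + P. Then Σᵢ R(Eᵢ', L', Eᵢ', L̄') = Ω²·( ½·B(P,P)·Σᵢ R(Eᵢ, L, Eᵢ, L) − R(P, L, P, L) − R(P, L, L̄, L) + Σᵢ R(Eᵢ, L, Eᵢ, L̄) + Σᵢ R(Eᵢ, L, Eᵢ, P) ). (This is the transformation law tr'_{X',Y'}R'(X', L', Y', L̄') = ½(γ,γ)Ω²·tr α − Ω²·α(γ^♯,γ^♯) − Ω²·β(γ^♯) + Ω²·tr R(X,L,Y,L̄) + Ω²·tr R(X,L,Y,γ^♯) of the traced curvature component under change of foliation.) -/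

import Mathlib

/-- Transformation law of the traced curvature component under change of foliation:
with `Eᵢ' = Eᵢ + γ(Eᵢ) • L`, `L' = Ω² • L`, `L̄' = ½ B(P,P) • L + L̄ + P`, one has
`Σᵢ R(Eᵢ', L', Eᵢ', L̄') = Ω² (½ B(P,P) Σᵢ R(Eᵢ,L,Eᵢ,L) − R(P,L,P,L) − R(P,L,L̄,L)
  + Σᵢ R(Eᵢ,L,Eᵢ,L̄) + Σᵢ R(Eᵢ,L,Eᵢ,P))`. -/
theorem stmt_6 {V : Type*} [AddCommGroup V] [Module ℝ V] [FiniteDimensional ℝ V]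
    (B : V →ₗ[ℝ] V →ₗ[ℝ] ℝ) (hBsymm : ∀ x y : V, B x y = B y x)
    (L Lb : V)
    (hLL : B L L = 0) (hLbLb : B Lb Lb = 0) (hLLb : B L Lb = -1)
    (S : Submodule ℝ V)
    (hSL : ∀ X ∈ S, B L X = 0) (hSLb : ∀ X ∈ S, B Lb X = 0)
    (hpos : ∀ X ∈ S, X ≠ 0 → 0 < B X X)
    (R : V →ₗ[ℝ] V →ₗ[ℝ] V →ₗ[ℝ] V →ₗ[ℝ] ℝ)
    (hR1 : ∀ x y z w : V, R x y z w = -R y x z w)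
    (hR2 : ∀ x y z w : V, R x y z w = -R x y w z)
    (hR3 : ∀ x y z w : V, R x y z w = R z w x y)
    (k : ℕ) (E : Module.Basis (Fin k) ℝ S)
    (hE : ∀ i j, B (E i : V) (E j : V) = if i = j then 1 else 0)
    (γ : S →ₗ[ℝ] ℝ) (P : V) (hPmem : P ∈ S)
    (hP : ∀ Y : S, B P (Y : V) = γ Y)
    (Ω : ℝ) :
    ∑ i, R ((E i : V) + γ (E i) • L) (Ω ^ 2 • L) ((E i : V) + γ (E i) • L)
        (((1 : ℝ) / 2 * B P P) • L + Lb + P)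
      = Ω ^ 2 * ((1 : ℝ) / 2 * B P P * ∑ i, R (E i : V) L (E i : V) L
          - R P L P L - R P L Lb L
          + ∑ i, R (E i : V) L (E i : V) Lb
          + ∑ i, R (E i : V) L (E i : V) P) := by
  have hzero1 : ∀ z w : V, R L L z w = 0 := by
    intro z w; have := hR1 L L z w; linarith
  have hzero2 : ∀ x y : V, R x y L L = 0 := by
    intro x y; have := hR2 x y L L; linarith
  set p : S := ⟨P, hPmem⟩ with hp
  have hPsum : P = ∑ i, γ (E i) • ((E i : S) : V) := by
    have hrepr : ∀ j, E.repr p j = γ (E j) := by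
      intro j
      have h1 : B P ((E j : S) : V) = γ (E j) := hP (E j)
      have h2 : P = ∑ i, E.repr p i • ((E i : S) : V) := by
        conv_lhs => rw [show P = (p : V) from rfl, ← E.sum_repr p]
        rw [Submodule.coe_sum]; simp only [Submodule.coe_smul]
      rw [h2] at h1
      rw [map_sum] at h1
      simp only [map_smul, LinearMap.sum_apply, LinearMap.smul_apply, smul_eq_mul, hE] at h1
      simpa [Finset.sum_ite_eq'] using h1
    have h2 : P = ∑ i, E.repr p i • ((E i : S) : V) := by
      conv_lhs => rw [show P = (p : V) from rfl, ← E.sum_repr p]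
      rw [Submodule.coe_sum]; simp only [Submodule.coe_smul]
    rw [h2]
    exact Finset.sum_congr rfl fun i _ => by rw [hrepr]
  have hA : ∀ w : V, ∑ i, γ (E i) * R ((E i : S) : V) L L w = R P L L w := by
    intro w
    conv_rhs => rw [hPsum]
    rw [map_sum]
    simp [Finset.sum_apply, LinearMap.sum_apply, LinearMap.smul_apply, smul_eq_mul]
  have h1 : ∑ i, γ (E i) * R ((E i : S) : V) L L Lb = - R P L Lb L := by
    rw [hA]; rw [hR2 P L Lb L]; ring
  have h2 : ∑ i, γ (E i) * R ((E i : S) : V) L L P = - R P L P L := by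
    rw [hA]; rw [hR2 P L P L]; ring
  have hterm : ∀ i, R (((E i : S) : V) + γ (E i) • L) (Ω ^ 2 • L) (((E i : S) : V) + γ (E i) • L)
        (((1 : ℝ) / 2 * B P P) • L + Lb + P)
      = Ω ^ 2 * ((1 : ℝ) / 2 * B P P * R ((E i : S) : V) L ((E i : S) : V) L
          + R ((E i : S) : V) L ((E i : S) : V) Lb
          + R ((E i : S) : V) L ((E i : S) : V) P
          + γ (E i) * R ((E i : S) : V) L L Lb
          + γ (E i) * R ((E i : S) : V) L L P) := by
    intro i
    simp only [map_add, map_smul, LinearMap.add_apply, LinearMap.smul_apply, smul_eq_mul,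
      hzero1, hzero2]
    ring
  rw [Finset.sum_congr rfl fun i _ => hterm i]
  rw [← Finset.mul_sum]
  simp only [Finset.sum_add_distrib, ← Finset.mul_sum, h1, h2]
  ring
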